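/- Let X be a measurable space, Y a separable metric space, and S a multifunction assigning to each x ∈ X a nonempty open subset S(x) ⊂ Y. Assume that for every y ∈ Y the set {x ∈ X : y ∈ S(x)} is measurable. Then S admits a measurable selection: there exists a measurable s : X → Y with s(x) ∈ S(x) for all x ∈ X. -/
import Mathlib


open MeasureTheory Filter Topology

noncomputable section

/-- Measurable selection criterion (Fonseca–Kružík, Lemma 3.10): a multifunction `S`
with nonempty open values in a separable metric space `Y`, such that
`{x : y ∈ S(x)}` is measurable for every `y`, admits a measurable selection. -/
theorem measurable_selection
    {X : Type*} [MeasurableSpace X]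
    {Y : Type*} [MetricSpace Y] [TopologicalSpace.SeparableSpace Y]
    [MeasurableSpace Y] [BorelSpace Y]
    (S : X → Set Y)
    (hne : ∀ x, (S x).Nonempty)
    (hopen : ∀ x, IsOpen (S x))
    (hmeas : ∀ y : Y, MeasurableSet {x : X | y ∈ S x}) :
    ∃ s : X → Y, Measurable s ∧ ∀ x, s x ∈ S x := by
  cases isEmpty_or_nonempty X with
  | inl h =>
    exact ⟨fun x => (h.elim x), measurable_of_empty _, fun x => h.elim x⟩
  | inr hX =>
    have hY : Nonempty Y := ⟨(hne hX.some).choose⟩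
    obtain ⟨u, hu⟩ := TopologicalSpace.exists_dense_seq Y
    classical
    have hp : ∀ x : X, ∃ n : ℕ, u n ∈ S x := by
      intro x
      obtain ⟨y, hy⟩ := hne x
      have := (hopen x).mem_nhds hy
      obtain ⟨n, hn⟩ := hu.exists_mem_open (hopen x) ⟨y, hy⟩
      exact ⟨n, hn⟩
    refine ⟨fun x => u (Nat.find (hp x)), ?_, fun x => Nat.find_spec (hp x)⟩
    exact (measurable_from_top (f := u)).comp
      (measurable_find hp fun k => hmeas (u k))
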